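/- Let Q be a finite connected non-simple locally strictly simple quandle. Then every proper subquandle of Q is isomorphic either to a block [a]_α or to the quotient Q/α for some congruence α of Q. -/
import Mathlib


/-!  Basic theory of quandles: structures, subquandles, congruences,
quotients, displacement groups, affine and principal quandles. -/

universe u v

/-- A quandle structure on a set `Q`: a binary operation whose left
translations are bijective, which is left self-distributive and idempotent. -/
structure QuandleStruct (Q : Type*) where
  act : Q → Q → Q
  act_bijective : ∀ a, Function.Bijective (act a)
  self_distrib : ∀ a b c, act a (act b c) = act (act a b) (act a c)
  act_idem : ∀ a, act a a = a

namespace QuandleStruct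

variable {Q : Type*} {R : Type*}

/-- The left translation `L_a` as a permutation of `Q`. -/
noncomputable def L (S : QuandleStruct Q) (a : Q) : Equiv.Perm Q :=
  Equiv.ofBijective (S.act a) (S.act_bijective a)

@[simp] lemma L_apply (S : QuandleStruct Q) (a b : Q) : S.L a b = S.act a b := rfl

/-- Left division `a \ b`. -/
noncomputable def ldiv (S : QuandleStruct Q) (a b : Q) : Q := (S.L a).symm b

@[simp] lemma ldiv_act (S : QuandleStruct Q) (a b : Q) : S.ldiv a (S.act a b) = b :=
  (S.L a).symm_apply_apply b

@[simp] lemma act_ldiv (S : QuandleStruct Q) (a b : Q) : S.act a (S.ldiv a b) = b :=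
  (S.L a).apply_symm_apply b

/-- The displacement group `Dis(Q)`, generated by all `L_a ∘ L_b⁻¹`. -/
def Dis (S : QuandleStruct Q) : Subgroup (Equiv.Perm Q) :=
  Subgroup.closure {g | ∃ a b, g = S.L a * (S.L b)⁻¹}

/-- A quandle is connected if its displacement group acts transitively. -/
def Connected (S : QuandleStruct Q) : Prop := ∀ x y : Q, ∃ g ∈ S.Dis, g x = y

/-- A quandle is faithful if `a ↦ L_a` is injective. -/
def Faithful (S : QuandleStruct Q) : Prop := Function.Injective S.L

/-- A quandle is latin if all right translations are bijective. -/
def Latin (S : QuandleStruct Q) : Prop := ∀ a : Q, Function.Bijective (fun b => S.act b a)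

/-- A subquandle: a nonempty subset closed under the operation and left division. -/
def IsSubquandle (S : QuandleStruct Q) (s : Set Q) : Prop :=
  s.Nonempty ∧ ∀ a ∈ s, ∀ b ∈ s, S.act a b ∈ s ∧ S.ldiv a b ∈ s

/-- The quandle structure induced on a subquandle. -/
def restrict (S : QuandleStruct Q) (s : Set Q) (hs : S.IsSubquandle s) :
    QuandleStruct s where
  act a b := ⟨S.act a.1 b.1, (hs.2 a.1 a.2 b.1 b.2).1⟩
  act_bijective a := by
    constructor
    · intro x y h
      exact Subtype.ext ((S.act_bijective a.1).1 (congrArg Subtype.val h))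
    · intro b
      refine ⟨⟨S.ldiv a.1 b.1, (hs.2 a.1 a.2 b.1 b.2).2⟩, Subtype.ext ?_⟩
      exact S.act_ldiv a.1 b.1
  self_distrib a b c := Subtype.ext (S.self_distrib a.1 b.1 c.1)
  act_idem a := Subtype.ext (S.act_idem a.1)

/-- A quandle (with more than one element) is strictly simple if it has no
proper subquandle. -/
def StrictlySimple (S : QuandleStruct Q) : Prop :=
  Nontrivial Q ∧ ∀ s : Set Q, S.IsSubquandle s → s.Nontrivial → s = Set.univ

/-- A quandle is locally strictly simple (LSS) if every proper subquandle is
strictly simple. -/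
def LSS (S : QuandleStruct Q) : Prop :=
  ∀ (s : Set Q) (hs : S.IsSubquandle s), s.Nontrivial → s ≠ Set.univ →
    StrictlySimple (S.restrict s hs)

/-- A congruence of a quandle: an equivalence relation compatible with the
operation and with left division. -/
structure IsCongruence (S : QuandleStruct Q) (r : Q → Q → Prop) : Prop where
  equiv : Equivalence r
  act_comp : ∀ {a b c d}, r a b → r c d → r (S.act a c) (S.act b d)
  ldiv_comp : ∀ {a b c d}, r a b → r c d → r (S.ldiv a c) (S.ldiv b d)

/-- The setoid attached to a congruence. -/
def IsCongruence.setoid {S : QuandleStruct Q} {r : Q → Q → Prop}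
    (hr : S.IsCongruence r) : Setoid Q := ⟨r, hr.equiv⟩

/-- The quotient quandle `Q/α`. -/
def quot (S : QuandleStruct Q) {r : Q → Q → Prop} (hr : S.IsCongruence r) :
    QuandleStruct (Quotient hr.setoid) where
  act := Quotient.map₂ S.act fun _ _ h1 _ _ h2 => hr.act_comp h1 h2
  act_bijective := by
    intro a
    induction a using Quotient.ind with
    | _ a =>
    constructor
    · intro x y
      induction x using Quotient.ind with
      | _ x =>
      induction y using Quotient.ind with
      | _ y =>
      intro h
      have h1 : r (S.act a x) (S.act a y) := Quotient.exact h
      have h2 := hr.ldiv_comp (hr.equiv.refl a) h1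
      rw [S.ldiv_act, S.ldiv_act] at h2
      exact Quotient.sound h2
    · intro b
      induction b using Quotient.ind with
      | _ b =>
      exact ⟨Quotient.mk _ (S.ldiv a b), congrArg (Quotient.mk _) (S.act_ldiv a b)⟩
  self_distrib := by
    intro a b c
    induction a using Quotient.ind with
    | _ a =>
    induction b using Quotient.ind with
    | _ b =>
    induction c using Quotient.ind with
    | _ c =>
    exact congrArg (Quotient.mk _) (S.self_distrib a b c)
  act_idem := by
    intro a
    induction a using Quotient.ind with
    | _ a =>
    exact congrArg (Quotient.mk _) (S.act_idem a)

/-- The congruence block `[a]_α` is a subquandle. -/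
lemma block_isSubquandle (S : QuandleStruct Q) {r : Q → Q → Prop}
    (hr : S.IsCongruence r) (a : Q) : S.IsSubquandle {b | r a b} := by
  refine ⟨⟨a, hr.equiv.refl a⟩, fun x hx y hy => ⟨?_, ?_⟩⟩
  · have h := hr.act_comp hx hy
    rwa [S.act_idem] at h
  · have h := hr.ldiv_comp hx hy
    have ha : S.ldiv a a = a := by
      have h2 := S.ldiv_act a a
      rwa [S.act_idem] at h2
    rwa [ha] at h

/-- A quandle is simple if its only congruences are `0_Q` (equality) and
`1_Q` (the full relation). -/
def Simple (S : QuandleStruct Q) : Prop :=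
  ∀ r : Q → Q → Prop, S.IsCongruence r →
    r = (fun a b : Q => a = b) ∨ r = (fun _ _ : Q => True)

/-- A quandle is subdirectly irreducible if the intersection of all congruences
different from `0_Q` is different from `0_Q`. -/
def SubdirectlyIrreducible (S : QuandleStruct Q) : Prop :=
  ∃ a b : Q, a ≠ b ∧ ∀ r : Q → Q → Prop, S.IsCongruence r →
    r ≠ (fun a b : Q => a = b) → r a b

/-- Isomorphism of quandles. -/
def QIso (S : QuandleStruct Q) (T : QuandleStruct R) : Prop :=
  ∃ e : Q ≃ R, ∀ a b, e (S.act a b) = T.act (e a) (e b)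

/-- The relation `σ_Q` : two elements are related iff their point stabilizers
in the displacement group coincide. -/
def sigmaRel (S : QuandleStruct Q) (a b : Q) : Prop :=
  ∀ g ∈ S.Dis, (g a = a ↔ g b = b)

/-- The displacement group relative to a relation `r`. -/
def DisRel (S : QuandleStruct Q) (r : Q → Q → Prop) : Subgroup (Equiv.Perm Q) :=
  Subgroup.closure {g | ∃ a b, r a b ∧ g = S.L a * (S.L b)⁻¹}

/-- The direct product of two quandles. -/
def prod (S : QuandleStruct Q) (T : QuandleStruct R) : QuandleStruct (Q × R) where
  act a b := (S.act a.1 b.1, T.act a.2 b.2)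
  act_bijective a := by
    show Function.Bijective (Prod.map (S.act a.1) (T.act a.2))
    exact (S.act_bijective a.1).prodMap (T.act_bijective a.2)
  self_distrib a b c := Prod.ext (S.self_distrib a.1 b.1 c.1) (T.self_distrib a.2 b.2 c.2)
  act_idem a := Prod.ext (S.act_idem a.1) (T.act_idem a.2)

end QuandleStruct

/-- The affine quandle `Aff(A, f)` over an abelian group `A` with
`a * b = (1 - f)(a) + f(b)`. -/
def affineQuandle (A : Type*) [AddCommGroup A] (f : A ≃+ A) : QuandleStruct A where
  act a b := a - f a + f b
  act_bijective a := by
    show Function.Bijective ((fun x : A => a - f a + x) ∘ f)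
    exact (Equiv.addLeft (a - f a)).bijective.comp f.bijective
  self_distrib a b c := by
    simp only [map_add, map_sub]
    abel
  act_idem a := by simp

/-- Data for an affine quandle: a finite abelian group together with an
automorphism. -/
structure AffineData : Type 1 where
  carrier : Type
  [grp : AddCommGroup carrier]
  [fin : Finite carrier]
  equivAdd : carrier ≃+ carrier

attribute [instance] AffineData.grp AffineData.fin

namespace QuandleStruct

/-- A quandle is affine if it is isomorphic to `Aff(A, f)` for some finite
abelian group `A` and automorphism `f`. -/
def IsAffine {Q : Type*} (S : QuandleStruct Q) : Prop :=
  ∃ D : AffineData, S.QIso (affineQuandle D.carrier D.equivAdd)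

end QuandleStruct

/-- The principal quandle `Q(G, f)` with `a * b = a f(a⁻¹ b)`. -/
def principalQuandle (G : Type*) [Group G] (f : G ≃* G) : QuandleStruct G where
  act a b := a * f (a⁻¹ * b)
  act_bijective a := by
    show Function.Bijective ((fun x : G => a * x) ∘ (⇑f) ∘ (fun b : G => a⁻¹ * b))
    exact ((Equiv.mulLeft a).bijective.comp f.bijective).comp (Equiv.mulLeft a⁻¹).bijective
  self_distrib a b c := by
    simp only [map_mul, map_inv, mul_inv_rev, inv_inv]
    group
  act_idem a := by simp

/-- An extraspecial `q`-group: a finite `q`-group whose center, derived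
subgroup and Frattini subgroup coincide and have order `q`. -/
def IsExtraspecial (q : ℕ) (G : Type*) [Group G] : Prop :=
  Finite G ∧ IsPGroup q G ∧ Subgroup.center G = commutator G ∧
    commutator G = frattini G ∧ Nat.card (Subgroup.center G) = q

/-- A bundled group. -/
structure GroupData : Type 1 where
  carrier : Type
  [grp : Group carrier]

attribute [instance] GroupData.grp


section Statement9Aux

open QuandleStruct

variable {Q : Type*}

/-- Elements of the displacement group preserve any congruence. -/
lemma dis_pres (S : QuandleStruct Q) {r : Q → Q → Prop} (hr : S.IsCongruence r) :
    ∀ g ∈ S.Dis, ∀ x y, r x y → r (g x) (g y) := by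
  let K : Subgroup (Equiv.Perm Q) :=
    { carrier := {g | ∀ x y, r x y ↔ r (g x) (g y)}
      one_mem' := fun _ _ => Iff.rfl
      mul_mem' := fun {g h} hg hh x y => (hh x y).trans (hg (h x) (h y))
      inv_mem' := fun {g} hg x y => by
        have := (hg (g⁻¹ x) (g⁻¹ y)).symm
        simpa using this }
  have hgen : {g : Equiv.Perm Q | ∃ a b, g = S.L a * (S.L b)⁻¹} ⊆ (K : Set (Equiv.Perm Q)) := by
    rintro g ⟨a, b, rfl⟩ x y
    have happ : ∀ z, (S.L a * (S.L b)⁻¹) z = S.act a (S.ldiv b z) := fun z => rfl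
    rw [happ, happ]
    constructor
    · intro h
      exact hr.act_comp (hr.equiv.refl a) (hr.ldiv_comp (hr.equiv.refl b) h)
    · intro h
      have h1 := hr.ldiv_comp (hr.equiv.refl a) h
      rw [S.ldiv_act, S.ldiv_act] at h1
      have h2 := hr.act_comp (hr.equiv.refl b) h1
      rw [S.act_ldiv, S.act_ldiv] at h2
      exact h2
  have hle : S.Dis ≤ K := (Subgroup.closure_le K).mpr hgen
  exact fun g hg x y h => (hle hg x y).mp h

lemma restrict_ldiv_val (S : QuandleStruct Q) {p : Set Q} (hp : S.IsSubquandle p)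
    (a b : p) : ((S.restrict p hp).ldiv a b).1 = S.ldiv a.1 b.1 := by
  apply (S.act_bijective a.1).1
  have h1 : S.act a.1 ((S.restrict p hp).ldiv a b).1
      = ((S.restrict p hp).act a ((S.restrict p hp).ldiv a b)).1 := rfl
  rw [h1, (S.restrict p hp).act_ldiv a b, S.act_ldiv]

/-- In an LSS quandle, a nontrivial subquandle contained in a proper
nontrivial subquandle equals it. -/
lemma sub_eq_of_subset (S : QuandleStruct Q) (hlss : S.LSS) {p u : Set Q}
    (hp : S.IsSubquandle p) (hpnt : p.Nontrivial) (hpne : p ≠ Set.univ)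
    (hu : S.IsSubquandle u) (hunt : u.Nontrivial) (hsub : u ⊆ p) : u = p := by
  have hss := hlss p hp hpnt hpne
  have htsub : (S.restrict p hp).IsSubquandle {x : p | x.1 ∈ u} := by
    constructor
    · obtain ⟨x, hx⟩ := hu.1
      exact ⟨⟨x, hsub hx⟩, hx⟩
    · intro a ha b hb
      refine ⟨(hu.2 a.1 ha b.1 hb).1, ?_⟩
      show ((S.restrict p hp).ldiv a b).1 ∈ u
      rw [restrict_ldiv_val S hp a b]
      exact (hu.2 a.1 ha b.1 hb).2
  have htnt : ({x : p | x.1 ∈ u}).Nontrivial := by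
    obtain ⟨x, hx, y, hy, hxy⟩ := hunt
    exact ⟨⟨x, hsub hx⟩, hx, ⟨y, hsub hy⟩, hy, fun h => hxy (congrArg Subtype.val h)⟩
  have huniv := hss.2 {x : p | x.1 ∈ u} htsub htnt
  refine Set.Subset.antisymm hsub (fun z hz => ?_)
  have : (⟨z, hz⟩ : p) ∈ {x : p | x.1 ∈ u} := huniv ▸ Set.mem_univ _
  exact this

end Statement9Aux

/-- In a finite connected non-simple LSS quandle, every proper
subquandle is isomorphic to a block `[a]_α` or to the quotient `Q/α` for some
congruence `α`. -/
theorem statement9 {Q : Type u} [Finite Q] (S : QuandleStruct Q)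
    (hconn : S.Connected) (hns : ¬ S.Simple) (hlss : S.LSS)
    (s : Set Q) (hs : S.IsSubquandle s) (hnt : s.Nontrivial) (hne : s ≠ Set.univ) :
    ∃ (r : Q → Q → Prop) (hr : S.IsCongruence r),
      (∃ a : Q, (S.restrict s hs).QIso
        (S.restrict {b | r a b} (S.block_isSubquandle hr a))) ∨
      (S.restrict s hs).QIso (S.quot hr) := by
  rw [QuandleStruct.Simple] at hns
  push_neg at hns
  obtain ⟨r, hr, hrne, hrnf⟩ := hns
  -- a related pair of distinct elements
  have hex : ∃ a b, r a b ∧ a ≠ b := by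
    by_contra hc
    push_neg at hc
    apply hrne
    funext a b
    exact propext ⟨fun h => hc a b h, fun h => h ▸ hr.equiv.refl a⟩
  -- an unrelated pair
  have hnex : ∃ c d, ¬ r c d := by
    by_contra hc
    push_neg at hc
    exact hrnf (funext fun c => funext fun d =>
      propext ⟨fun _ => trivial, fun _ => hc c d⟩)
  obtain ⟨a0, b0, hab, hne0⟩ := hex
  obtain ⟨c0, d0, hcd⟩ := hnex
  -- every block is nontrivial
  have hblock_nt : ∀ x : Q, ({b | r x b}).Nontrivial := by
    intro x
    obtain ⟨g, hg, hgx⟩ := hconn a0 x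
    have hrel : r x (g b0) := by
      have := dis_pres S hr g hg a0 b0 hab
      rwa [hgx] at this
    refine ⟨x, hr.equiv.refl x, g b0, hrel, fun h => hne0 ?_⟩
    exact g.injective (hgx.trans h)
  -- every block is proper
  have hblock_ne : ∀ x : Q, {b | r x b} ≠ Set.univ := by
    intro x h
    apply hcd
    have h1 : r x c0 := Set.eq_univ_iff_forall.mp h c0
    have h2 : r x d0 := Set.eq_univ_iff_forall.mp h d0
    exact hr.equiv.trans (hr.equiv.symm h1) h2
  refine ⟨r, hr, ?_⟩
  by_cases hcase : ∀ x ∈ s, ∀ y ∈ s, r x y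
  · -- s lies inside one block, hence equals it
    obtain ⟨x, hx⟩ := hs.1
    have hsub : s ⊆ {b | r x b} := fun z hz => hcase x hx z hz
    have hseq : s = {b | r x b} :=
      sub_eq_of_subset S hlss (S.block_isSubquandle hr x) (hblock_nt x)
        (hblock_ne x) hs hnt hsub
    refine Or.inl ⟨x, ⟨Equiv.setCongr hseq, fun a b => Subtype.ext rfl⟩⟩
  · push_neg at hcase
    -- s meets each block at most once
    have hinj : ∀ x ∈ s, ∀ y ∈ s, r x y → x = y := by
      intro x hxs y hys hrxy
      by_contra hxy
      have hu : S.IsSubquandle (s ∩ {b | r x b}) := by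
        refine ⟨⟨x, hxs, hr.equiv.refl x⟩, fun a ha b hb => ?_⟩
        exact ⟨⟨(hs.2 a ha.1 b hb.1).1,
                ((S.block_isSubquandle hr x).2 a ha.2 b hb.2).1⟩,
               ⟨(hs.2 a ha.1 b hb.1).2,
                ((S.block_isSubquandle hr x).2 a ha.2 b hb.2).2⟩⟩
      have hunt' : (s ∩ {b | r x b}).Nontrivial :=
        ⟨x, ⟨hxs, hr.equiv.refl x⟩, y, ⟨hys, hrxy⟩, hxy⟩
      have hBeq : s ∩ {b | r x b} = {b | r x b} :=
        sub_eq_of_subset S hlss (S.block_isSubquandle hr x) (hblock_nt x)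
          (hblock_ne x) hu hunt' Set.inter_subset_right
      have hbs : {b | r x b} ⊆ s := by
        rw [← hBeq]; exact Set.inter_subset_left
      have hseq : {b | r x b} = s :=
        sub_eq_of_subset S hlss hs hnt hne (S.block_isSubquandle hr x)
          (hblock_nt x) hbs
      obtain ⟨x0, hx0, y0, hy0, hnr⟩ := hcase
      apply hnr
      have h1 : x0 ∈ {b | r x b} := by rw [hseq]; exact hx0
      have h2 : y0 ∈ {b | r x b} := by rw [hseq]; exact hy0
      exact hr.equiv.trans (hr.equiv.symm h1) h2
    -- s meets every block
    have hsurj : ∀ q : Q, ∃ x ∈ s, r x q := by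
      by_contra hc
      push_neg at hc
      obtain ⟨q0, hq0⟩ := hc
      have hPsub : S.IsSubquandle {z | ∃ x ∈ s, r x z} := by
        constructor
        · obtain ⟨x, hx⟩ := hs.1
          exact ⟨x, x, hx, hr.equiv.refl x⟩
        · rintro z ⟨xz, hxz, hrz⟩ w ⟨xw, hxw, hrw⟩
          exact ⟨⟨S.act xz xw, (hs.2 _ hxz _ hxw).1, hr.act_comp hrz hrw⟩,
                 ⟨S.ldiv xz xw, (hs.2 _ hxz _ hxw).2, hr.ldiv_comp hrz hrw⟩⟩
      have hsP : s ⊆ {z | ∃ x ∈ s, r x z} := fun z hz => ⟨z, hz, hr.equiv.refl z⟩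
      have hPnt : ({z | ∃ x ∈ s, r x z}).Nontrivial := hnt.mono hsP
      have hPne : {z | ∃ x ∈ s, r x z} ≠ Set.univ := by
        intro h
        obtain ⟨x, hxs, hrx⟩ := Set.eq_univ_iff_forall.mp h q0
        exact hq0 x hxs hrx
      obtain ⟨x, hxs⟩ := hs.1
      have hbP : {b | r x b} ⊆ {z | ∃ y ∈ s, r y z} := fun z hz => ⟨x, hxs, hz⟩
      have hPeq : {b | r x b} = {z | ∃ y ∈ s, r y z} :=
        sub_eq_of_subset S hlss hPsub hPnt hPne (S.block_isSubquandle hr x)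
          (hblock_nt x) hbP
      obtain ⟨x0, hx0, y0, hy0, hnr⟩ := hcase
      apply hnr
      have h1 : r x x0 := by
        have : x0 ∈ {z | ∃ y ∈ s, r y z} := hsP hx0
        rwa [← hPeq] at this
      have h2 : r x y0 := by
        have : y0 ∈ {z | ∃ y ∈ s, r y z} := hsP hy0
        rwa [← hPeq] at this
      exact hr.equiv.trans (hr.equiv.symm h1) h2
    refine Or.inr ?_
    have hbij : Function.Bijective
        (fun x : s => (Quotient.mk hr.setoid x.1)) := by
      constructor
      · intro x y h
        exact Subtype.ext (hinj x.1 x.2 y.1 y.2 (Quotient.exact h))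
      · intro q
        induction q using Quotient.ind with
        | _ q =>
          obtain ⟨x, hxs, hrxq⟩ := hsurj q
          exact ⟨⟨x, hxs⟩, Quotient.sound hrxq⟩
    exact ⟨Equiv.ofBijective _ hbij, fun a b => rfl⟩
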